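/- The map η : G ×_P 𝒞₀ → 𝒞 sending the class [g, p(w⁻¹Bw ∩ P), p̂(ŵ⁻¹B̂ŵ ∩ P̂)] to the triple (gpw⁻¹B, gp̂ŵ⁻¹B̂, gP̂) is a well-defined bijection. -/
import Mathlib


/-!
STATEMENT 1: Let `Ghat` be a group with subgroups `G, Phat, Bhat ≤ Ghat`, `P = G ∩ Phat`, `B ≤ G`,
and fixed `w ∈ G`, `what ∈ Ghat`.  With `G ×_P 𝒞₀` the quotient of
`G × (P/(w⁻¹Bw ∩ P)) × (Phat/(what⁻¹Bhatwhat ∩ Phat))` by the `P`-action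
`p·(g, x, xhat) = (gp⁻¹, px, pxhat)`, and `𝒞 ⊆ (G/B) × (Ghat/Bhat) × (Ghat/Phat)` the set of
triples `(gB, ghatBhat, zPhat)` with `z ∈ gBwPhat` and `z ∈ ghatBhatwhatPhat`:
the map `η : G ×_P 𝒞₀ → 𝒞`,
`[g, p(w⁻¹Bw ∩ P), phat(what⁻¹Bhatwhat ∩ Phat)] ↦ (gpw⁻¹B, gphatwhat⁻¹Bhat, gPhat)`,
is a well-defined bijection.
-/

namespace Stmt1

variable {Ghat : Type*} [Group Ghat]

/-- Triples `(g, x, xhat)` with `g ∈ G`, `x ∈ P = G ⊓ Phat`, `xhat ∈ Phat`; such a triple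
represents the point `[g, x·(w⁻¹Bw ∩ P), xhat·(what⁻¹Bhatwhat ∩ Phat)]` of `G ×_P 𝒞₀`. -/
abbrev Dom (G Phat : Subgroup Ghat) : Type _ :=
  {t : Ghat × Ghat × Ghat // t.1 ∈ G ∧ t.2.1 ∈ G ⊓ Phat ∧ t.2.2 ∈ Phat}

/-- Two triples represent the same point of `G ×_P 𝒞₀` iff they differ by the
`P`-action `p·(g, x, xhat) = (gp⁻¹, px, pxhat)` combined with the right-coset ambiguity by
`w⁻¹Bw ∩ P` and `what⁻¹Bhatwhat ∩ Phat`; so `G ×_P 𝒞₀ = Quot (domRel G Phat Bhat B w what)`. -/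
def domRel (G Phat Bhat B : Subgroup Ghat) (w what : Ghat) (a b : Dom G Phat) : Prop :=
  ∃ p ∈ G ⊓ Phat, ∃ q, (q ∈ G ⊓ Phat ∧ w * q * w⁻¹ ∈ B) ∧
    ∃ qhat, (qhat ∈ Phat ∧ what * qhat * what⁻¹ ∈ Bhat) ∧
      b.1.1 = a.1.1 * p⁻¹ ∧ b.1.2.1 = p * a.1.2.1 * q ∧ b.1.2.2 = p * a.1.2.2 * qhat

/-- Triples `(g, ghat, z)` with `g ∈ G`, `z ∈ gBwPhat` and `z ∈ ghatBhatwhatPhat`, representing the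
point `(gB, ghatBhat, zPhat)` of `𝒞` (the defining conditions do not depend on the chosen
coset representatives). -/
abbrev Cod (G Phat Bhat B : Subgroup Ghat) (w what : Ghat) : Type _ :=
  {t : Ghat × Ghat × Ghat // t.1 ∈ G ∧
    (∃ q ∈ B, ∃ p ∈ Phat, t.2.2 = t.1 * q * w * p) ∧
    (∃ qhat ∈ Bhat, ∃ phat ∈ Phat, t.2.2 = t.2.1 * qhat * what * phat)}

/-- Two triples represent the same point of `𝒞` iff the components differ on the right
by elements of `B`, `Bhat`, `Phat` respectively; so `𝒞 = Quot (codRel G Phat Bhat B w what)`. -/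
def codRel (G Phat Bhat B : Subgroup Ghat) (w what : Ghat) (a b : Cod G Phat Bhat B w what) : Prop :=
  ∃ q ∈ B, ∃ qhat ∈ Bhat, ∃ p ∈ Phat,
    b.1.1 = a.1.1 * q ∧ b.1.2.1 = a.1.2.1 * qhat ∧ b.1.2.2 = a.1.2.2 * p

/-- The explicit map on representatives. -/
def toCod (G Phat Bhat B : Subgroup Ghat) (w what : Ghat) (hw : w ∈ G)
    (a : Dom G Phat) : Cod G Phat Bhat B w what :=
  ⟨(a.1.1 * a.1.2.1 * w⁻¹, a.1.1 * a.1.2.2 * what⁻¹, a.1.1),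
    mul_mem (mul_mem a.2.1 (Subgroup.mem_inf.mp a.2.2.1).1) (inv_mem hw),
    ⟨1, one_mem _, a.1.2.1⁻¹, inv_mem (Subgroup.mem_inf.mp a.2.2.1).2, by group⟩,
    ⟨1, one_mem _, a.1.2.2⁻¹, inv_mem a.2.2.2, by group⟩⟩

lemma codRel_equivalence (G Phat Bhat B : Subgroup Ghat) (w what : Ghat) :
    Equivalence (codRel G Phat Bhat B w what) := by
  constructor
  · intro a
    exact ⟨1, one_mem _, 1, one_mem _, 1, one_mem _, by group, by group, by group⟩
  · rintro a b ⟨q, hq, qhat, hqhat, p, hp, h1, h2, h3⟩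
    exact ⟨q⁻¹, inv_mem hq, qhat⁻¹, inv_mem hqhat, p⁻¹, inv_mem hp,
      by rw [h1]; group, by rw [h2]; group, by rw [h3]; group⟩
  · rintro a b c ⟨q, hq, qhat, hqhat, p, hp, h1, h2, h3⟩
      ⟨q', hq', qhat', hqhat', p', hp', h1', h2', h3'⟩
    exact ⟨q * q', mul_mem hq hq', qhat * qhat', mul_mem hqhat hqhat',
      p * p', mul_mem hp hp',
      by rw [h1', h1]; group, by rw [h2', h2]; group, by rw [h3', h3]; group⟩

lemma toCod_sound (G Phat Bhat B : Subgroup Ghat) (w what : Ghat) (hw : w ∈ G)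
    {a b : Dom G Phat} (hab : domRel G Phat Bhat B w what a b) :
    codRel G Phat Bhat B w what (toCod G Phat Bhat B w what hw a)
      (toCod G Phat Bhat B w what hw b) := by
  obtain ⟨p, hp, q, ⟨hqP, hqB⟩, qhat, ⟨hqhatP, hqhatB⟩, h1, h2, h3⟩ := hab
  refine ⟨w * q * w⁻¹, hqB, what * qhat * what⁻¹, hqhatB,
    p⁻¹, inv_mem (Subgroup.mem_inf.mp hp).2, ?_, ?_, ?_⟩
  · show b.1.1 * b.1.2.1 * w⁻¹ = a.1.1 * a.1.2.1 * w⁻¹ * (w * q * w⁻¹)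
    rw [h1, h2]; group
  · show b.1.1 * b.1.2.2 * what⁻¹ = a.1.1 * a.1.2.2 * what⁻¹ * (what * qhat * what⁻¹)
    rw [h1, h3]; group
  · show b.1.1 = a.1.1 * p⁻¹
    exact h1

lemma toCod_inj (G Phat Bhat B : Subgroup Ghat) (w what : Ghat) (hw : w ∈ G)
    {a b : Dom G Phat}
    (h : codRel G Phat Bhat B w what (toCod G Phat Bhat B w what hw a)
      (toCod G Phat Bhat B w what hw b)) :
    domRel G Phat Bhat B w what a b := by
  obtain ⟨q, hq, qhat, hqhat, p, hp, h1, h2, h3⟩ := h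
  -- h1 : b.1.1 * b.1.2.1 * w⁻¹ = a.1.1 * a.1.2.1 * w⁻¹ * q
  -- h2 : b.1.1 * b.1.2.2 * what⁻¹ = a.1.1 * a.1.2.2 * what⁻¹ * qhat
  -- h3 : b.1.1 = a.1.1 * p
  replace h1 : b.1.1 * b.1.2.1 * w⁻¹ = a.1.1 * a.1.2.1 * w⁻¹ * q := h1
  replace h2 : b.1.1 * b.1.2.2 * what⁻¹ = a.1.1 * a.1.2.2 * what⁻¹ * qhat := h2
  replace h3 : b.1.1 = a.1.1 * p := h3
  have hpG : p ∈ G := by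
    have : p = a.1.1⁻¹ * b.1.1 := by rw [h3]; group
    rw [this]; exact mul_mem (inv_mem a.2.1) b.2.1
  have hpP : p ∈ G ⊓ Phat := Subgroup.mem_inf.mpr ⟨hpG, hp⟩
  have hx2 : b.1.2.1 = p⁻¹ * a.1.2.1 * (w⁻¹ * q * w) := by
    have e : b.1.2.1 = (a.1.1 * p)⁻¹ * (a.1.1 * p * b.1.2.1 * w⁻¹) * w := by group
    rw [e, ← h3, h1, h3]; group
  have hxhat2 : b.1.2.2 = p⁻¹ * a.1.2.2 * (what⁻¹ * qhat * what) := by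
    have e : b.1.2.2 = (a.1.1 * p)⁻¹ * (a.1.1 * p * b.1.2.2 * what⁻¹) * what := by group
    rw [e, ← h3, h2, h3]; group
  have hq0 : (w⁻¹ * q * w) ∈ G ⊓ Phat := by
    have e : w⁻¹ * q * w = a.1.2.1⁻¹ * p * b.1.2.1 := by rw [hx2]; group
    rw [e]
    exact mul_mem (mul_mem (inv_mem a.2.2.1) hpP) b.2.2.1
  have hqhat0 : (what⁻¹ * qhat * what) ∈ Phat := by
    have e : what⁻¹ * qhat * what = a.1.2.2⁻¹ * p * b.1.2.2 := by rw [hxhat2]; group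
    rw [e]
    exact mul_mem (mul_mem (inv_mem a.2.2.2) hp) b.2.2.2
  have hqB' : w * (w⁻¹ * q * w) * w⁻¹ ∈ B := by
    have e : w * (w⁻¹ * q * w) * w⁻¹ = q := by group
    rw [e]; exact hq
  have hqhatB' : what * (what⁻¹ * qhat * what) * what⁻¹ ∈ Bhat := by
    have e : what * (what⁻¹ * qhat * what) * what⁻¹ = qhat := by group
    rw [e]; exact hqhat
  refine ⟨p⁻¹, inv_mem hpP, w⁻¹ * q * w, ⟨hq0, hqB'⟩,
    what⁻¹ * qhat * what, ⟨hqhat0, hqhatB'⟩, ?_, ?_, ?_⟩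
  · rw [h3]; group
  · exact hx2
  · exact hxhat2

/-- `η : G ×_P 𝒞₀ → 𝒞`, `[g, p̄, phatbar] ↦ (gpw⁻¹B, gphatwhat⁻¹Bhat, gPhat)`, is a well-defined
bijection. -/
theorem eta_well_defined_bijection (G Phat Bhat B : Subgroup Ghat) (hBG : B ≤ G)
    (w what : Ghat) (hw : w ∈ G) :
    ∃ η : Quot (domRel G Phat Bhat B w what) → Quot (codRel G Phat Bhat B w what),
      Function.Bijective η ∧
      ∀ a : Dom G Phat, ∃ h,
        η (Quot.mk _ a) =
          Quot.mk _ ⟨(a.1.1 * a.1.2.1 * w⁻¹, a.1.1 * a.1.2.2 * what⁻¹, a.1.1), h⟩ := by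
  refine ⟨Quot.lift (fun a => Quot.mk _ (toCod G Phat Bhat B w what hw a))
    (fun a b hab => Quot.sound (toCod_sound G Phat Bhat B w what hw hab)), ⟨?_, ?_⟩, ?_⟩
  · -- injective
    intro ca cb
    induction ca using Quot.ind with | _ a => ?_
    induction cb using Quot.ind with | _ b => ?_
    intro h
    have h' : codRel G Phat Bhat B w what (toCod G Phat Bhat B w what hw a)
        (toCod G Phat Bhat B w what hw b) :=
      ((codRel_equivalence G Phat Bhat B w what).eqvGen_iff).mp (Quot.eq.mp h)
    exact Quot.sound (toCod_inj G Phat Bhat B w what hw h')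
  · -- surjective
    intro cc
    induction cc using Quot.ind with | _ c => ?_
    obtain ⟨⟨g, ghat, z⟩, hg, ⟨q, hq, p, hp, hz1⟩, ⟨qhat, hqhat, phat, hphat, hz2⟩⟩ := c
    refine ⟨Quot.mk _ ⟨(g * q * w, 1, p * phat⁻¹),
      mul_mem (mul_mem hg (hBG hq)) hw, one_mem _, mul_mem hp (inv_mem hphat)⟩, ?_⟩
    apply Quot.sound
    refine ⟨q⁻¹, inv_mem hq, qhat⁻¹, inv_mem hqhat, p, hp, ?_, ?_, ?_⟩
    · show g = g * q * w * 1 * w⁻¹ * q⁻¹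
      group
    · show ghat = g * q * w * (p * phat⁻¹) * what⁻¹ * qhat⁻¹
      have hkey : ghat * qhat * what * phat = g * q * w * p := hz2.symm.trans hz1
      calc ghat = ghat * qhat * what * phat * (phat⁻¹ * what⁻¹ * qhat⁻¹) := by group
        _ = g * q * w * p * (phat⁻¹ * what⁻¹ * qhat⁻¹) := by rw [hkey]
        _ = _ := by group
    · show z = g * q * w * p
      exact hz1
  · intro a
    exact ⟨(toCod G Phat Bhat B w what hw a).2, rfl⟩

end Stmt1
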